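/- Let Φ(x¹,x²) = log( cosh x¹ + cosh x² ) on ℝ². Then Hess Φ is positive definite at every point of ℝ², and Φ satisfies the WDVV equations: Σ_{p,q} Φ^{pq} Φ_{jlp} Φ_{ikq} = Σ_{p,q} Φ^{pq} Φ_{ilp} Φ_{jkq} for all indices i,j,k,l ∈ {1,2} at every point; equivalently, Σ_{p,q} Φ^{pq} ( Φ_{11p} Φ_{22q} − Φ_{12p} Φ_{12q} ) = 0 everywhere, so the Hessian metric Hess Φ on ℝ² is Riemannian-flat and Φ defines a Frobenius structure on ℝ². -/

import Mathlib

open Real Matrix ContinuousLinearMap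

/-- Partial derivative of `f : ℝⁿ → ℝ` in the `i`-th coordinate direction. -/
noncomputable def pd {n : ℕ} (i : Fin n) (f : (Fin n → ℝ) → ℝ) : (Fin n → ℝ) → ℝ :=
  fun x => fderiv ℝ f x (Pi.single i 1)

/-- Hessian matrix of second partial derivatives of `f : ℝⁿ → ℝ`. -/
noncomputable def hessian {n : ℕ} (f : (Fin n → ℝ) → ℝ) (x : Fin n → ℝ) :
    Matrix (Fin n) (Fin n) ℝ :=
  Matrix.of fun i j => pd i (pd j f) x

/-- Third partial derivatives `Φ_{ijk}` of `f : ℝⁿ → ℝ`. -/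
noncomputable def pd3 {n : ℕ} (f : (Fin n → ℝ) → ℝ) (i j k : Fin n) (x : Fin n → ℝ) : ℝ :=
  pd i (pd j (pd k f)) x

/-- The potential `Φ(x¹,x²) = log(cosh x¹ + cosh x²)` on `ℝ²`. -/
noncomputable def ΦCosh (x : Fin 2 → ℝ) : ℝ :=
  Real.log (Real.cosh (x 0) + Real.cosh (x 1))

noncomputable def SS (x : Fin 2 → ℝ) : ℝ := Real.cosh (x 0) + Real.cosh (x 1)

noncomputable def pr (i : Fin 2) : (Fin 2 → ℝ) →L[ℝ] ℝ := ContinuousLinearMap.proj i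

@[simp] lemma pr_single (i j : Fin 2) : pr i (Pi.single j 1) = if i = j then 1 else 0 := by
  simp [pr, proj_apply, Pi.single_apply]

lemma SS_pos (x : Fin 2 → ℝ) : 0 < SS x := add_pos (Real.cosh_pos _) (Real.cosh_pos _)

lemma pd_eq {f : (Fin 2 → ℝ) → ℝ} {L : (Fin 2 → ℝ) →L[ℝ] ℝ} {x : Fin 2 → ℝ} (i : Fin 2)
    (h : HasFDerivAt f L x) : pd i f x = L (Pi.single i 1) := by
  simp only [pd, h.fderiv]

lemma hasCosh (i : Fin 2) (x : Fin 2 → ℝ) :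
    HasFDerivAt (fun x : Fin 2 → ℝ => Real.cosh (x i)) (Real.sinh (x i) • pr i) x :=
  HasDerivAt.comp_hasFDerivAt (f := fun y : Fin 2 → ℝ => y i) x (Real.hasDerivAt_cosh (x i)) (hasFDerivAt_apply i x)

lemma hasSinh (i : Fin 2) (x : Fin 2 → ℝ) :
    HasFDerivAt (fun x : Fin 2 → ℝ => Real.sinh (x i)) (Real.cosh (x i) • pr i) x :=
  HasDerivAt.comp_hasFDerivAt (f := fun y : Fin 2 → ℝ => y i) x (Real.hasDerivAt_sinh (x i)) (hasFDerivAt_apply i x)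

lemma hasSS (x : Fin 2 → ℝ) :
    HasFDerivAt SS (Real.sinh (x 0) • pr 0 + Real.sinh (x 1) • pr 1) x :=
  (hasCosh 0 x).add (hasCosh 1 x)

lemma hasΦ (x : Fin 2 → ℝ) :
    HasFDerivAt ΦCosh ((SS x)⁻¹ • (Real.sinh (x 0) • pr 0 + Real.sinh (x 1) • pr 1)) x :=
  (Real.hasDerivAt_log (SS_pos x).ne').comp_hasFDerivAt x (hasSS x)

lemma pd1 (i : Fin 2) : pd i ΦCosh = fun x => Real.sinh (x i) / SS x := by
  funext x
  rw [pd_eq i (hasΦ x)]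
  fin_cases i <;>
    simp [ContinuousLinearMap.add_apply, ContinuousLinearMap.smul_apply, proj_apply,
      Pi.single_apply, div_eq_inv_mul]

lemma hasDiv {N D : (Fin 2 → ℝ) → ℝ} {N' D' : (Fin 2 → ℝ) →L[ℝ] ℝ} {x : Fin 2 → ℝ}
    (hN : HasFDerivAt N N' x) (hD : HasFDerivAt D D' x) (h : D x ≠ 0) :
    HasFDerivAt (fun y => N y / D y)
      (N x • (-(D x ^ 2)⁻¹ • D') + (D x)⁻¹ • N') x := by
  have hinv : HasFDerivAt (fun y => (D y)⁻¹) (-(D x ^ 2)⁻¹ • D') x :=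
    (hasDerivAt_inv h).comp_hasFDerivAt x hD
  have := hN.mul hinv
  simp only [div_eq_mul_inv]
  exact this

lemma hasQ (i : Fin 2) (x : Fin 2 → ℝ) :
    HasFDerivAt (fun x => Real.sinh (x i) / SS x)
      (Real.sinh (x i) • (-(SS x ^ 2)⁻¹ • (Real.sinh (x 0) • pr 0 + Real.sinh (x 1) • pr 1)) +
        (SS x)⁻¹ • (Real.cosh (x i) • pr i)) x :=
  hasDiv (hasSinh i x) (hasSS x) (SS_pos x).ne'

lemma pd2 (i j : Fin 2) (x : Fin 2 → ℝ) :
    pd j (pd i ΦCosh) x =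
      (if i = j then 1 + Real.cosh (x 0) * Real.cosh (x 1)
        else -(Real.sinh (x 0) * Real.sinh (x 1))) / (SS x * SS x) := by
  rw [pd1, pd_eq j (hasQ i x)]
  have h0 := Real.cosh_sq (x 0)
  have h1 := Real.cosh_sq (x 1)
  fin_cases i <;> fin_cases j <;>
    simp [ContinuousLinearMap.add_apply, ContinuousLinearMap.smul_apply,
      ContinuousLinearMap.sub_apply, SS, smul_eq_mul] <;>
    field_simp <;>
    first
      | ring1
      | exact Or.inl (by ring1)
      | linear_combination (Real.cosh (x 0) + Real.cosh (x 1)) ^ 3 * h0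
      | linear_combination (Real.cosh (x 0) + Real.cosh (x 1)) ^ 3 * h1
      | linear_combination h0
      | linear_combination h1

lemma pd2fun (k j : Fin 2) :
    pd j (pd k ΦCosh) = fun x =>
      (if k = j then 1 + Real.cosh (x 0) * Real.cosh (x 1)
        else -(Real.sinh (x 0) * Real.sinh (x 1))) / (SS x * SS x) :=
  funext fun x => pd2 k j x

noncomputable def AA (x : Fin 2 → ℝ) : ℝ :=
  Real.sinh (x 0) * (Real.cosh (x 1) ^ 2 - Real.cosh (x 0) * Real.cosh (x 1) - 2) / SS x ^ 3

noncomputable def BB (x : Fin 2 → ℝ) : ℝ :=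
  Real.sinh (x 1) * (Real.cosh (x 0) ^ 2 - Real.cosh (x 0) * Real.cosh (x 1) - 2) / SS x ^ 3

lemma pdP (i : Fin 2) (x : Fin 2 → ℝ) :
    pd i (fun x => (1 + Real.cosh (x 0) * Real.cosh (x 1)) / (SS x * SS x)) x =
      if i = 0 then AA x else BB x := by
  have hN : HasFDerivAt (fun x : Fin 2 → ℝ => 1 + Real.cosh (x 0) * Real.cosh (x 1)) _ x :=
    (hasFDerivAt_const (1:ℝ) x).add ((hasCosh 0 x).mul (hasCosh 1 x))
  have hD : HasFDerivAt (fun y => SS y * SS y) _ x := (hasSS x).mul (hasSS x)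
  have hne : SS x * SS x ≠ 0 := mul_ne_zero (SS_pos x).ne' (SS_pos x).ne'
  rw [pd_eq i (hasDiv hN hD hne)]
  have h0 := Real.cosh_sq (x 0)
  have h1 := Real.cosh_sq (x 1)
  have hs := (SS_pos x).ne'
  fin_cases i <;>
    simp [AA, BB, ContinuousLinearMap.add_apply, ContinuousLinearMap.smul_apply,
      ContinuousLinearMap.sub_apply, SS, smul_eq_mul] <;>
    field_simp [SS] <;> ring1

lemma pdM (i : Fin 2) (x : Fin 2 → ℝ) :
    pd i (fun x => -(Real.sinh (x 0) * Real.sinh (x 1)) / (SS x * SS x)) x =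
      if i = 0 then BB x else AA x := by
  have hN : HasFDerivAt (fun x : Fin 2 → ℝ => -(Real.sinh (x 0) * Real.sinh (x 1))) _ x :=
    ((hasSinh 0 x).mul (hasSinh 1 x)).neg
  have hD : HasFDerivAt (fun y => SS y * SS y) _ x := (hasSS x).mul (hasSS x)
  have hne : SS x * SS x ≠ 0 := mul_ne_zero (SS_pos x).ne' (SS_pos x).ne'
  rw [pd_eq i (hasDiv hN hD hne)]
  have h0 := Real.cosh_sq (x 0)
  have h1 := Real.cosh_sq (x 1)
  have hs := (SS_pos x).ne'
  fin_cases i <;>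
    simp [AA, BB, ContinuousLinearMap.add_apply, ContinuousLinearMap.smul_apply,
      ContinuousLinearMap.sub_apply, ContinuousLinearMap.neg_apply, SS, smul_eq_mul] <;>
    field_simp [SS] <;>
    first
      | linear_combination
          (-2 * Real.sinh (x 1) * (Real.cosh (x 0) + Real.cosh (x 1)) ^ 6) * h0
      | linear_combination
          (-2 * Real.sinh (x 0) * (Real.cosh (x 0) + Real.cosh (x 1)) ^ 6) * h1
      | (simp only [Real.sinh_sq]; ring_nf)

lemma pd3_eq (i j k : Fin 2) (x : Fin 2 → ℝ) :
    pd3 ΦCosh i j k x =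
      if k = j then (if i = 0 then AA x else BB x) else (if i = 0 then BB x else AA x) := by
  rw [pd3, pd2fun k j]
  by_cases h : k = j
  · simp only [if_pos h]
    exact pdP i x
  · simp only [if_neg h]
    exact pdM i x

lemma hess_eq (x : Fin 2 → ℝ) :
    hessian ΦCosh x =
      !![(1 + Real.cosh (x 0) * Real.cosh (x 1)) / (SS x * SS x),
          -(Real.sinh (x 0) * Real.sinh (x 1)) / (SS x * SS x);
        -(Real.sinh (x 0) * Real.sinh (x 1)) / (SS x * SS x),
          (1 + Real.cosh (x 0) * Real.cosh (x 1)) / (SS x * SS x)] := by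
  ext i j
  fin_cases i <;> fin_cases j <;>
    simp [hessian, pd2]

lemma hess_inv (x : Fin 2 → ℝ) :
    (hessian ΦCosh x)⁻¹ =
      !![1 + Real.cosh (x 0) * Real.cosh (x 1), Real.sinh (x 0) * Real.sinh (x 1);
        Real.sinh (x 0) * Real.sinh (x 1), 1 + Real.cosh (x 0) * Real.cosh (x 1)] := by
  have h0 := Real.cosh_sq (x 0)
  have h1 := Real.cosh_sq (x 1)
  have hs := (SS_pos x).ne'
  have hdet : (hessian ΦCosh x).det = (SS x * SS x)⁻¹ := by
    rw [hess_eq, Matrix.det_fin_two_of]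
    field_simp [SS]
    unfold SS
    linear_combination (Real.cosh (x 1) ^ 2 - 1) * h0 + Real.sinh (x 0) ^ 2 * h1
  rw [Matrix.inv_def, hdet, hess_eq, Matrix.adjugate_fin_two_of]
  ext i j
  fin_cases i <;> fin_cases j <;>
    simp [Ring.inverse_eq_inv', SS, smul_eq_mul] <;>
    field_simp [SS]

lemma hess_posdef (x : Fin 2 → ℝ) : (hessian ΦCosh x).PosDef := by
  have h0 := Real.cosh_sq (x 0)
  have h1 := Real.cosh_sq (x 1)
  have hc0 := Real.one_le_cosh (x 0)
  have hc1 := Real.one_le_cosh (x 1)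
  have hs := SS_pos x
  constructor
  · rw [hess_eq]
    ext i j
    fin_cases i <;> fin_cases j <;> simp [Matrix.conjTranspose_apply]
  · intro v hv
    have hv2 : 0 < v 0 ^ 2 + v 1 ^ 2 := by
      rcases Finsupp.ne_iff.1 hv with ⟨i, hi⟩
      fin_cases i <;> simp only [Fin.mk_zero, Fin.mk_one, Fin.isValue, Pi.zero_apply] at hi <;>
        [ nlinarith [sq_pos_of_ne_zero hi, sq_nonneg (v 1)];
          nlinarith [sq_pos_of_ne_zero hi, sq_nonneg (v 0)] ]
    rw [hess_eq]
    simp only [star_trivial, Finsupp.sum_fintype, mul_zero, zero_mul, implies_true, Matrix.mulVec, dotProduct, Fin.sum_univ_two,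
      Matrix.cons_val', Matrix.cons_val_zero, Matrix.cons_val_one, Matrix.head_cons,
      Matrix.head_fin_const, Matrix.of_apply, Matrix.cons_val_fin_one, Matrix.empty_val',
      Matrix.cons_val_zero, Matrix.cons_val_one]
    rw [Finsupp.sum_fintype _ _ (by simp)]
    simp only [Fin.sum_univ_two, Matrix.cons_val_zero, Matrix.cons_val_one, Matrix.head_cons]
    have hss : (0:ℝ) < SS x * SS x := mul_pos hs hs
    have hcd : (0:ℝ) < Real.cosh (x 0) * Real.cosh (x 1) := by nlinarith
    have hprod : (Real.cosh (x 0) * Real.cosh (x 1)) ^ 2 =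
        (Real.sinh (x 0) * Real.sinh (x 1)) ^ 2 + Real.sinh (x 0) ^ 2 + Real.sinh (x 1) ^ 2 + 1 := by
      linear_combination Real.cosh (x 1) ^ 2 * h0 + (Real.sinh (x 0) ^ 2 + 1) * h1
    have key : 0 < (1 + Real.cosh (x 0) * Real.cosh (x 1)) * (v 0 ^ 2 + v 1 ^ 2) -
        2 * (Real.sinh (x 0) * Real.sinh (x 1)) * (v 0 * v 1) := by
      nlinarith [hprod,
        sq_nonneg (Real.cosh (x 0) * Real.cosh (x 1) * v 0 -
          Real.sinh (x 0) * Real.sinh (x 1) * v 1),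
        sq_nonneg (Real.cosh (x 0) * Real.cosh (x 1) * v 1 -
          Real.sinh (x 0) * Real.sinh (x 1) * v 0),
        sq_nonneg (Real.sinh (x 0) * v 1), sq_nonneg (Real.sinh (x 1) * v 1),
        sq_nonneg (Real.sinh (x 0) * v 0), sq_nonneg (Real.sinh (x 1) * v 0),
        mul_pos hcd hv2, hcd, hv2, sq_nonneg (v 0), sq_nonneg (v 1)]
    have expand : v 0 * (((1 + Real.cosh (x 0) * Real.cosh (x 1)) * v 0) / (SS x * SS x) +
          (-(Real.sinh (x 0) * Real.sinh (x 1)) * v 1) / (SS x * SS x)) +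
        v 1 * ((-(Real.sinh (x 0) * Real.sinh (x 1)) * v 0) / (SS x * SS x) +
          ((1 + Real.cosh (x 0) * Real.cosh (x 1)) * v 1) / (SS x * SS x)) =
        ((1 + Real.cosh (x 0) * Real.cosh (x 1)) * (v 0 ^ 2 + v 1 ^ 2) -
          2 * (Real.sinh (x 0) * Real.sinh (x 1)) * (v 0 * v 1)) / (SS x * SS x) := by
      field_simp
      ring
    convert div_pos key hss using 1
    rw [← expand]
    ring

/-- `Φ = log(cosh x¹ + cosh x²)` has positive definite Hessian everywhere and
satisfies the WDVV equations (equivalently, the single two-dimensional WDVV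
equation); hence its Hessian metric on `ℝ²` is flat and `Φ` defines a Frobenius
structure. -/
theorem wdvv_cosh_potential (x : Fin 2 → ℝ) :
    (hessian ΦCosh x).PosDef ∧
    (∀ i j k l : Fin 2,
      ∑ p : Fin 2, ∑ q : Fin 2,
        (hessian ΦCosh x)⁻¹ p q * pd3 ΦCosh j l p x * pd3 ΦCosh i k q x =
      ∑ p : Fin 2, ∑ q : Fin 2,
        (hessian ΦCosh x)⁻¹ p q * pd3 ΦCosh i l p x * pd3 ΦCosh j k q x) ∧
    (∑ p : Fin 2, ∑ q : Fin 2,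
      (hessian ΦCosh x)⁻¹ p q *
        (pd3 ΦCosh 0 0 p x * pd3 ΦCosh 1 1 q x -
          pd3 ΦCosh 0 1 p x * pd3 ΦCosh 0 1 q x) = 0) := by
  refine ⟨hess_posdef x, ?_, ?_⟩
  · intro i j k l
    fin_cases i <;> fin_cases j <;> fin_cases k <;> fin_cases l <;>
      simp only [Fin.sum_univ_two, pd3_eq, hess_inv, Matrix.cons_val', Matrix.cons_val_zero,
        Matrix.cons_val_one, Matrix.head_cons, Matrix.head_fin_const, Matrix.empty_val',
        Matrix.cons_val_fin_one, Fin.isValue] <;>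
      norm_num <;> ring
  · simp only [Fin.sum_univ_two, pd3_eq, hess_inv, Matrix.cons_val', Matrix.cons_val_zero,
      Matrix.cons_val_one, Matrix.head_cons, Matrix.head_fin_const, Matrix.empty_val',
      Matrix.cons_val_fin_one, Fin.isValue]
    norm_num
    ring
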